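/- Let λ > 0 and a > 2, and let p_λ be the SCAD penalty. Then p_λ is subadditive in the sense that for all x, y ∈ ℝ, p_λ(|x + y|) ≤ p_λ(|x|) + p_λ(|y|). -/

import Mathlib

/-- The SCAD penalty with regularization parameter `lam` and non-convexity parameter `a`. -/
noncomputable def scad (lam a t : ℝ) : ℝ :=
  if t ≤ lam then lam * t
  else if t ≤ a * lam then -(t ^ 2 - 2 * a * lam * t + lam ^ 2) / (2 * (a - 1))
  else (a + 1) * lam ^ 2 / 2

lemma scad_mono (lam a : ℝ) (hlam : 0 < lam) (ha : 2 < a) {u v : ℝ} (hu : 0 ≤ u)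
    (huv : u ≤ v) : scad lam a u ≤ scad lam a v := by
  have hD : (0:ℝ) < 2 * (a - 1) := by linarith
  unfold scad
  rcases le_or_gt v lam with hv | hv
  · rw [if_pos (huv.trans hv), if_pos hv]; nlinarith
  · rw [if_neg (not_le.2 hv)]
    rcases le_or_gt v (a * lam) with hv2 | hv2
    · rw [if_pos hv2]
      rcases le_or_gt u lam with hu1 | hu1
      · rw [if_pos hu1, le_div_iff₀ hD]
        nlinarith [mul_nonneg (sub_nonneg.2 hv.le) (by nlinarith : (0:ℝ) ≤ 2*a*lam - v - lam)]
      · rw [if_neg (not_le.2 hu1), if_pos (huv.trans hv2), div_le_div_iff₀ hD hD]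
        nlinarith [mul_nonneg (sub_nonneg.2 huv) (by nlinarith : (0:ℝ) ≤ 2*a*lam - u - v)]
    · rw [if_neg (not_le.2 hv2)]
      rcases le_or_gt u lam with hu1 | hu1
      · rw [if_pos hu1]; nlinarith
      · rw [if_neg (not_le.2 hu1)]
        rcases le_or_gt u (a * lam) with hu2 | hu2
        · rw [if_pos hu2, div_le_iff₀ hD]; nlinarith [sq_nonneg (u - a*lam)]
        · rw [if_neg (not_le.2 hu2)]

lemma scad_add (lam a : ℝ) (hlam : 0 < lam) (ha : 2 < a) {s t : ℝ} (hs : 0 ≤ s)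
    (ht : 0 ≤ t) : scad lam a (s + t) ≤ scad lam a s + scad lam a t := by
  have hD : (0:ℝ) < 2 * (a - 1) := by linarith
  have hD' : (2 * (a - 1) : ℝ) ≠ 0 := hD.ne'
  unfold scad
  rcases le_or_gt (s + t) lam with hu | hu
  · rw [if_pos hu, if_pos (by linarith), if_pos (by linarith)]; ring_nf; rfl
  · rw [if_neg (not_le.2 hu)]
    rcases le_or_gt (s + t) (a * lam) with hu2 | hu2
    · rw [if_pos hu2]
      rcases le_or_gt s lam with hs1 | hs1 <;> rcases le_or_gt t lam with ht1 | ht1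
      · rw [if_pos hs1, if_pos ht1, div_le_iff₀ hD]
        nlinarith [sq_nonneg (s + t - lam)]
      · rw [if_pos hs1, if_neg (not_le.2 ht1), if_pos (by linarith),
          div_le_iff₀ hD, add_mul, div_mul_cancel₀ _ hD']
        nlinarith [mul_nonneg hs (by linarith : (0:ℝ) ≤ s + 2*t - 2*lam)]
      · rw [if_pos ht1, if_neg (not_le.2 hs1), if_pos (by linarith),
          div_le_iff₀ hD, add_mul, div_mul_cancel₀ _ hD']
        nlinarith [mul_nonneg ht (by linarith : (0:ℝ) ≤ t + 2*s - 2*lam)]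
      · rw [if_neg (not_le.2 hs1), if_neg (not_le.2 ht1), if_pos (by linarith),
          if_pos (by linarith), ← add_div, div_le_div_iff₀ hD hD]
        nlinarith [mul_pos (by linarith : (0:ℝ) < s - lam) (by linarith : (0:ℝ) < t - lam)]
    · rw [if_neg (not_le.2 hu2)]
      rcases le_or_gt s lam with hs1 | hs1 <;> rcases le_or_gt t lam with ht1 | ht1
      · exfalso; nlinarith
      · rw [if_pos hs1, if_neg (not_le.2 ht1)]
        rcases le_or_gt t (a * lam) with ht2 | ht2
        · rw [if_pos ht2]
          rw [← sub_le_iff_le_add', le_div_iff₀ hD]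
          nlinarith [mul_nonneg (by linarith : (0:ℝ) ≤ a*lam - t) (by linarith : (0:ℝ) ≤ t - lam)]
        · rw [if_neg (not_le.2 ht2)]; nlinarith
      · rw [if_pos ht1, if_neg (not_le.2 hs1)]
        rcases le_or_gt s (a * lam) with hs2 | hs2
        · rw [if_pos hs2]
          rw [← sub_le_iff_le_add, le_div_iff₀ hD]
          nlinarith [mul_nonneg (by linarith : (0:ℝ) ≤ a*lam - s) (by linarith : (0:ℝ) ≤ s - lam)]
        · rw [if_neg (not_le.2 hs2)]; nlinarith
      · rw [if_neg (not_le.2 hs1), if_neg (not_le.2 ht1)]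
        rcases le_or_gt s (a * lam) with hs2 | hs2
        · rcases le_or_gt t (a * lam) with ht2 | ht2
          · rw [if_pos hs2, if_pos ht2, ← add_div,
              div_le_div_iff₀ (by norm_num : (0:ℝ) < 2) hD]
            nlinarith [mul_nonneg (by linarith : (0:ℝ) ≤ a*lam - s) (by linarith : (0:ℝ) ≤ a*lam - t),
              mul_nonneg (by linarith : (0:ℝ) ≤ s - lam) (by linarith : (0:ℝ) ≤ t - lam),
              mul_pos hlam hlam]
          · rw [if_pos hs2, if_neg (not_le.2 ht2), le_add_iff_nonneg_left,
              le_div_iff₀ hD]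
            nlinarith [sq_nonneg (s - a*lam)]
        · rw [if_neg (not_le.2 hs2)]
          rcases le_or_gt t (a * lam) with ht2 | ht2
          · rw [if_pos ht2, le_add_iff_nonneg_right, le_div_iff₀ hD]
            nlinarith [sq_nonneg (t - a*lam)]
          · rw [if_neg (not_le.2 ht2), le_add_iff_nonneg_left]
            positivity

/-- Subadditivity of the SCAD penalty: `p_λ(|x+y|) ≤ p_λ(|x|) + p_λ(|y|)`. -/
theorem scad_subadditive (lam a : ℝ) (hlam : 0 < lam) (ha : 2 < a) (x y : ℝ) :
    scad lam a |x + y| ≤ scad lam a |x| + scad lam a |y| := by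
  calc scad lam a |x + y| ≤ scad lam a (|x| + |y|) :=
        scad_mono lam a hlam ha (abs_nonneg _) (abs_add_le x y)
    _ ≤ _ := scad_add lam a hlam ha (abs_nonneg x) (abs_nonneg y)
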